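/- Let C be a symmetric monoidal (∞,n)-category. The trace of the identity automorphism on a dualizable object A (the dimension of A) equals the composite 1 → A ⊗ A^∨ → 1 of coevaluation followed by evaluation, and the trace functor Tr : Aut(C) → ΩC is symmetric monoidal: Tr(A ⊗ B, a ⊗ b) ≃ Tr(A,a) ⊗ Tr(B,b) for dualizable A, B with automorphisms a, b. (For n = 1: in any symmetric monoidal category, for dualizable objects A, B with automorphisms a, b, the trace of a ⊗ b on A ⊗ B equals the product (composite under ⊗ in End(1)) of the traces of a and b.) -/

import Mathlib

/-!
STATEMENT 13: In a symmetric monoidal category, the trace of the identity on a dualizable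
object `A` (its dimension) is the composite `1 → A ⊗ A^∨ → 1` of the coevaluation followed
by the evaluation, and the trace functor is symmetric monoidal: for dualizable `A`, `B`
with automorphisms `a`, `b`, `Tr(a ⊗ₘ b) = Tr(a) ⊗ Tr(b)` (the product, i.e. composite, in
`End(1)`).
-/

open CategoryTheory MonoidalCategory

noncomputable section

namespace Stmt13

variable {C : Type*} [Category C] [MonoidalCategory C] [SymmetricCategory C]

/-- The trace of `a : X ⟶ X`, for a dualizable object `X` with dual `Xd`:
`1 → X ⊗ Xd → X ⊗ Xd → Xd ⊗ X → 1`. -/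
def mtrace (X Xd : C) [ExactPairing X Xd] (a : X ⟶ X) : 𝟙_ C ⟶ 𝟙_ C :=
  η_ X Xd ≫ (a ▷ Xd) ≫ (β_ X Xd).hom ≫ ε_ X Xd

/-- The trace does not depend on the choice of exact pairing exhibiting `Xd` as a
right dual of `X`. -/
lemma mtrace_indep (X Xd : C) (p q : ExactPairing X Xd) (a : X ⟶ X) :
    @mtrace C _ _ _ X Xd p a = @mtrace C _ _ _ X Xd q a := by
  letI A : HasRightDual X := @HasRightDual.mk C _ _ X Xd p
  letI B : HasRightDual X := @HasRightDual.mk C _ _ X Xd q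
  let j : Xd ⟶ Xd := @rightAdjointMate C _ _ X X A B (𝟙 X)
  have h1 : (@ExactPairing.coevaluation C _ _ X Xd q) ≫ X ◁ j =
      @ExactPairing.coevaluation C _ _ X Xd p := by
    have h := @coevaluation_comp_rightAdjointMate C _ _ X X A B (𝟙 X)
    rw [id_whiskerRight, Category.comp_id] at h
    exact h
  have h2 : j ▷ X ≫ (@ExactPairing.evaluation C _ _ X Xd p) =
      @ExactPairing.evaluation C _ _ X Xd q := by
    have h := @rightAdjointMate_comp_evaluation C _ _ X X A B (𝟙 X)
    rw [MonoidalCategory.whiskerLeft_id, Category.id_comp] at h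
    exact h
  symm
  calc @mtrace C _ _ _ X Xd q a
      = @ExactPairing.coevaluation C _ _ X Xd q ≫ a ▷ Xd ≫ (β_ X Xd).hom ≫
        (j ▷ X ≫ @ExactPairing.evaluation C _ _ X Xd p) := by rw [h2]; rfl
    _ = @ExactPairing.coevaluation C _ _ X Xd q ≫ a ▷ Xd ≫ X ◁ j ≫ (β_ X Xd).hom ≫
        @ExactPairing.evaluation C _ _ X Xd p := by
        rw [← BraidedCategory.braiding_naturality_right_assoc]
    _ = @ExactPairing.coevaluation C _ _ X Xd q ≫ X ◁ j ≫ a ▷ Xd ≫ (β_ X Xd).hom ≫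
        @ExactPairing.evaluation C _ _ X Xd p := by
        rw [whisker_exchange_assoc]
    _ = @mtrace C _ _ _ X Xd p a := by rw [reassoc_of% h1]; rfl

set_option maxHeartbeats 1600000 in
def tensorPairing (X Xd Y Yd : C) [ExactPairing X Xd] [ExactPairing Y Yd] :
    ExactPairing (X ⊗ Y) (Yd ⊗ Xd) where
  coevaluation' := η_ X Xd ⊗≫ X ◁ η_ Y Yd ▷ Xd ⊗≫ 𝟙 ((X ⊗ Y) ⊗ (Yd ⊗ Xd))
  evaluation' := 𝟙 ((Yd ⊗ Xd) ⊗ (X ⊗ Y)) ⊗≫ Yd ◁ ε_ X Xd ▷ Y ⊗≫ ε_ Y Yd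
  coevaluation_evaluation' := by
    calc (Yd ⊗ Xd) ◁ (η_ X Xd ⊗≫ X ◁ η_ Y Yd ▷ Xd ⊗≫ 𝟙 ((X ⊗ Y) ⊗ (Yd ⊗ Xd))) ≫
          (α_ _ _ _).inv ≫
          (𝟙 ((Yd ⊗ Xd) ⊗ (X ⊗ Y)) ⊗≫ Yd ◁ ε_ X Xd ▷ Y ⊗≫ ε_ Y Yd) ▷ (Yd ⊗ Xd)
        = 𝟙 ((Yd ⊗ Xd) ⊗ 𝟙_ C) ⊗≫ Yd ◁ (Xd ◁ η_ X Xd) ⊗≫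
            ((Yd ⊗ (Xd ⊗ X)) ◁ (η_ Y Yd ▷ Xd) ≫ (Yd ◁ ε_ X Xd) ▷ ((Y ⊗ Yd) ⊗ Xd)) ⊗≫
            ε_ Y Yd ▷ (Yd ⊗ Xd) := by
          monoidal
      _ = 𝟙 ((Yd ⊗ Xd) ⊗ 𝟙_ C) ⊗≫ Yd ◁ (Xd ◁ η_ X Xd) ⊗≫
            ((Yd ◁ ε_ X Xd) ▷ (𝟙_ C ⊗ Xd) ≫ (Yd ⊗ 𝟙_ C) ◁ (η_ Y Yd ▷ Xd)) ⊗≫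
            ε_ Y Yd ▷ (Yd ⊗ Xd) := by
          rw [whisker_exchange]
      _ = 𝟙 ((Yd ⊗ Xd) ⊗ 𝟙_ C) ⊗≫ Yd ◁ (Xd ◁ η_ X Xd ⊗≫ ε_ X Xd ▷ Xd) ⊗≫
            (Yd ◁ η_ Y Yd ⊗≫ ε_ Y Yd ▷ Yd) ▷ Xd ⊗≫ 𝟙 (𝟙_ C ⊗ (Yd ⊗ Xd)) := by
          monoidal
      _ = (ρ_ (Yd ⊗ Xd)).hom ≫ (λ_ (Yd ⊗ Xd)).inv := by
          rw [ExactPairing.coevaluation_evaluation'', ExactPairing.coevaluation_evaluation'']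
          monoidal
  evaluation_coevaluation' := by
    calc (η_ X Xd ⊗≫ X ◁ η_ Y Yd ▷ Xd ⊗≫ 𝟙 ((X ⊗ Y) ⊗ (Yd ⊗ Xd))) ▷ (X ⊗ Y) ≫
          (α_ _ _ _).hom ≫
          (X ⊗ Y) ◁ (𝟙 ((Yd ⊗ Xd) ⊗ (X ⊗ Y)) ⊗≫ Yd ◁ ε_ X Xd ▷ Y ⊗≫ ε_ Y Yd)
        = 𝟙 (𝟙_ C ⊗ (X ⊗ Y)) ⊗≫ η_ X Xd ▷ (X ⊗ Y) ⊗≫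
            ((X ◁ η_ Y Yd) ▷ ((Xd ⊗ X) ⊗ Y) ≫ (X ⊗ (Y ⊗ Yd)) ◁ (ε_ X Xd ▷ Y)) ⊗≫
            X ◁ (Y ◁ ε_ Y Yd) ⊗≫ 𝟙 ((X ⊗ Y) ⊗ 𝟙_ C) := by
          monoidal
      _ = 𝟙 (𝟙_ C ⊗ (X ⊗ Y)) ⊗≫ η_ X Xd ▷ (X ⊗ Y) ⊗≫
            ((X ⊗ 𝟙_ C) ◁ (ε_ X Xd ▷ Y) ≫ (X ◁ η_ Y Yd) ▷ (𝟙_ C ⊗ Y)) ⊗≫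
            X ◁ (Y ◁ ε_ Y Yd) ⊗≫ 𝟙 ((X ⊗ Y) ⊗ 𝟙_ C) := by
          rw [← whisker_exchange]
      _ = 𝟙 (𝟙_ C ⊗ (X ⊗ Y)) ⊗≫ (η_ X Xd ▷ X ⊗≫ X ◁ ε_ X Xd) ▷ Y ⊗≫
            X ◁ (η_ Y Yd ▷ Y ⊗≫ Y ◁ ε_ Y Yd) ⊗≫ 𝟙 ((X ⊗ Y) ⊗ 𝟙_ C) := by
          monoidal
      _ = (λ_ (X ⊗ Y)).hom ≫ (ρ_ (X ⊗ Y)).inv := by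
          rw [ExactPairing.evaluation_coevaluation'', ExactPairing.evaluation_coevaluation'']
          monoidal


set_option maxHeartbeats 3000000 in
/-- Multiplicativity of the trace with respect to the canonical tensor pairing. -/
lemma mtrace_tensor (X Xd Y Yd : C) [ExactPairing X Xd] [ExactPairing Y Yd] (a : X ⟶ X) (b : Y ⟶ Y) :
    @mtrace C _ _ _ (X ⊗ Y) (Yd ⊗ Xd) (tensorPairing X Xd Y Yd) (a ⊗ₘ b)
      = mtrace X Xd a ≫ mtrace Y Yd b := by
  have hXD : (α_ X (Yd ⊗ Xd) Y).inv ≫ (β_ X (Yd ⊗ Xd)).hom ▷ Y ≫ (α_ (Yd ⊗ Xd) X Y).hom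
      = (β_ X ((Yd ⊗ Xd) ⊗ Y)).hom ≫ (α_ (Yd ⊗ Xd) Y X).hom ≫ (Yd ⊗ Xd) ◁ (β_ X Y).inv := by
    rw [← cancel_mono ((Yd ⊗ Xd) ◁ (β_ X Y).hom)]
    rw [BraidedCategory.braiding_tensor_right_hom]
    simp
  have hg := BraidedCategory.braiding_naturality_right X
    ((λ_ Xd).inv ≫ (η_ Y Yd ▷ Xd) ≫ ((β_ Y Yd).hom ▷ Xd) ≫ (α_ Yd Y Xd).hom ≫
      (Yd ◁ (β_ Y Xd).hom) ≫ (α_ Yd Xd Y).inv)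
  have hN2 := BraidedCategory.braiding_naturality_right Y (Xd ◁ a ≫ ε_ X Xd)
  calc @mtrace C _ _ _ (X ⊗ Y) (Yd ⊗ Xd) (tensorPairing X Xd Y Yd) (a ⊗ₘ b)
      = (η_ X Xd ⊗≫ X ◁ η_ Y Yd ▷ Xd ⊗≫ 𝟙 ((X ⊗ Y) ⊗ (Yd ⊗ Xd))) ≫
        ((a ⊗ₘ b) ▷ (Yd ⊗ Xd) ≫ (β_ (X ⊗ Y) (Yd ⊗ Xd)).hom) ≫
        (𝟙 ((Yd ⊗ Xd) ⊗ (X ⊗ Y)) ⊗≫ Yd ◁ ε_ X Xd ▷ Y ⊗≫ ε_ Y Yd) := by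
        simp only [mtrace, tensorPairing, ExactPairing.coevaluation, ExactPairing.evaluation,
          Category.assoc]
        rfl
    _ = (η_ X Xd ⊗≫ X ◁ η_ Y Yd ▷ Xd ⊗≫ 𝟙 ((X ⊗ Y) ⊗ (Yd ⊗ Xd))) ≫
        ((β_ (X ⊗ Y) (Yd ⊗ Xd)).hom ≫ (Yd ⊗ Xd) ◁ (a ⊗ₘ b)) ≫
        (𝟙 ((Yd ⊗ Xd) ⊗ (X ⊗ Y)) ⊗≫ Yd ◁ ε_ X Xd ▷ Y ⊗≫ ε_ Y Yd) := by
        rw [BraidedCategory.braiding_naturality_left]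
    _ = 𝟙 (𝟙_ C) ⊗≫ η_ X Xd ⊗≫ X ◁ η_ Y Yd ▷ Xd ⊗≫ X ◁ (β_ Y Yd).hom ▷ Xd ⊗≫
        X ◁ (Yd ◁ (β_ Y Xd).hom) ⊗≫
        ((α_ X (Yd ⊗ Xd) Y).inv ≫ (β_ X (Yd ⊗ Xd)).hom ▷ Y ≫ (α_ (Yd ⊗ Xd) X Y).hom) ⊗≫
        (Yd ⊗ Xd) ◁ (a ⊗ₘ b) ⊗≫ Yd ◁ ε_ X Xd ▷ Y ⊗≫ ε_ Y Yd := by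
        rw [BraidedCategory.braiding_tensor_left_hom X Y (Yd ⊗ Xd), BraidedCategory.braiding_tensor_right_hom Y Yd Xd]
        monoidal
    _ = 𝟙 (𝟙_ C) ⊗≫ η_ X Xd ⊗≫
        (X ◁ ((λ_ Xd).inv ≫ (η_ Y Yd ▷ Xd) ≫ ((β_ Y Yd).hom ▷ Xd) ≫ (α_ Yd Y Xd).hom ≫
          (Yd ◁ (β_ Y Xd).hom) ≫ (α_ Yd Xd Y).inv) ≫ (β_ X ((Yd ⊗ Xd) ⊗ Y)).hom) ⊗≫
        (Yd ⊗ Xd) ◁ (β_ X Y).inv ⊗≫ (Yd ⊗ Xd) ◁ (a ⊗ₘ b) ⊗≫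
        Yd ◁ ε_ X Xd ▷ Y ⊗≫ ε_ Y Yd := by
        rw [hXD]
        monoidal
    _ = 𝟙 (𝟙_ C) ⊗≫ η_ X Xd ⊗≫
        ((β_ X Xd).hom ≫ ((λ_ Xd).inv ≫ (η_ Y Yd ▷ Xd) ≫ ((β_ Y Yd).hom ▷ Xd) ≫
          (α_ Yd Y Xd).hom ≫ (Yd ◁ (β_ Y Xd).hom) ≫ (α_ Yd Xd Y).inv) ▷ X) ⊗≫
        (Yd ⊗ Xd) ◁ (β_ X Y).inv ⊗≫ (Yd ⊗ Xd) ◁ (a ⊗ₘ b) ⊗≫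
        Yd ◁ ε_ X Xd ▷ Y ⊗≫ ε_ Y Yd := by
        rw [hg]
    _ = 𝟙 (𝟙_ C) ⊗≫ η_ X Xd ⊗≫ (β_ X Xd).hom ⊗≫ η_ Y Yd ▷ (Xd ⊗ X) ⊗≫
        (β_ Y Yd).hom ▷ (Xd ⊗ X) ⊗≫ Yd ◁ (β_ Y (Xd ⊗ X)).hom ⊗≫
        (Yd ⊗ Xd) ◁ (a ⊗ₘ b) ⊗≫ Yd ◁ ε_ X Xd ▷ Y ⊗≫ ε_ Y Yd := by
        rw [← SymmetricCategory.braiding_swap_eq_inv_braiding,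
          BraidedCategory.braiding_tensor_right_hom Y Xd X]
        monoidal
    _ = 𝟙 (𝟙_ C) ⊗≫ η_ X Xd ⊗≫ (β_ X Xd).hom ⊗≫ η_ Y Yd ▷ (Xd ⊗ X) ⊗≫
        (β_ Y Yd).hom ▷ (Xd ⊗ X) ⊗≫ Yd ◁ (β_ Y (Xd ⊗ X)).hom ⊗≫
        Yd ◁ ((Xd ◁ a) ▷ Y) ⊗≫ Yd ◁ (((Xd ⊗ X) ◁ b) ≫ (ε_ X Xd ▷ Y)) ⊗≫ ε_ Y Yd := by
        rw [MonoidalCategory.tensorHom_def]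
        monoidal
    _ = 𝟙 (𝟙_ C) ⊗≫ η_ X Xd ⊗≫ (β_ X Xd).hom ⊗≫ η_ Y Yd ▷ (Xd ⊗ X) ⊗≫
        (β_ Y Yd).hom ▷ (Xd ⊗ X) ⊗≫ Yd ◁ (β_ Y (Xd ⊗ X)).hom ⊗≫
        Yd ◁ ((Xd ◁ a) ▷ Y) ⊗≫ Yd ◁ ((ε_ X Xd ▷ Y) ≫ (𝟙_ C ◁ b)) ⊗≫ ε_ Y Yd := by
        rw [whisker_exchange]
    _ = 𝟙 (𝟙_ C) ⊗≫ η_ X Xd ⊗≫ (β_ X Xd).hom ⊗≫ η_ Y Yd ▷ (Xd ⊗ X) ⊗≫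
        (β_ Y Yd).hom ▷ (Xd ⊗ X) ⊗≫
        Yd ◁ ((β_ Y (Xd ⊗ X)).hom ≫ (Xd ◁ a ≫ ε_ X Xd) ▷ Y) ⊗≫
        Yd ◁ b ⊗≫ ε_ Y Yd := by
        monoidal
    _ = 𝟙 (𝟙_ C) ⊗≫ η_ X Xd ⊗≫ (β_ X Xd).hom ⊗≫ η_ Y Yd ▷ (Xd ⊗ X) ⊗≫
        (β_ Y Yd).hom ▷ (Xd ⊗ X) ⊗≫
        Yd ◁ (Y ◁ (Xd ◁ a ≫ ε_ X Xd) ≫ (β_ Y (𝟙_ C)).hom) ⊗≫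
        Yd ◁ b ⊗≫ ε_ Y Yd := by
        rw [hN2]
    _ = 𝟙 (𝟙_ C) ⊗≫ η_ X Xd ⊗≫ (β_ X Xd).hom ⊗≫
        ((η_ Y Yd ≫ (β_ Y Yd).hom) ▷ (Xd ⊗ X) ≫ (Yd ⊗ Y) ◁ (Xd ◁ a ≫ ε_ X Xd)) ⊗≫
        Yd ◁ b ⊗≫ ε_ Y Yd := by
        rw [braiding_tensorUnit_right]
        monoidal
    _ = 𝟙 (𝟙_ C) ⊗≫ η_ X Xd ⊗≫ (β_ X Xd).hom ⊗≫
        (𝟙_ C ◁ (Xd ◁ a ≫ ε_ X Xd) ≫ (η_ Y Yd ≫ (β_ Y Yd).hom) ▷ (𝟙_ C)) ⊗≫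
        Yd ◁ b ⊗≫ ε_ Y Yd := by
        rw [← whisker_exchange]
    _ = mtrace X Xd a ≫ mtrace Y Yd b := by
        simp only [mtrace]
        rw [BraidedCategory.braiding_naturality_left_assoc a Xd,
          BraidedCategory.braiding_naturality_left_assoc b Yd]
        monoidal

theorem trace_dim_and_multiplicative
    (X Xd Y Yd : C) [ExactPairing X Xd] [ExactPairing Y Yd]
    [ExactPairing (X ⊗ Y) (Yd ⊗ Xd)]
    (a : X ⟶ X) (b : Y ⟶ Y) :
    -- the trace of the identity is coevaluation followed by evaluation
    mtrace X Xd (𝟙 X) = η_ X Xd ≫ (β_ X Xd).hom ≫ ε_ X Xd ∧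
    -- multiplicativity of the trace
    mtrace (X ⊗ Y) (Yd ⊗ Xd) (a ⊗ₘ b) = mtrace X Xd a ≫ mtrace Y Yd b := by
  constructor
  · simp [mtrace]
  · rw [mtrace_indep (X ⊗ Y) (Yd ⊗ Xd) _ (tensorPairing X Xd Y Yd)]
    exact mtrace_tensor X Xd Y Yd a b

end Stmt13
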